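/- Let C ⊆ 𝔽_q^{m×n} be an 𝔽_q-linear MRD-code with minimum distance d > 1 and m ≤ n. Then the left idealiser L(C) = {Y ∈ 𝔽_q^{m×m} : YC ∈ C for all C ∈ C} is a finite field (under matrix addition and multiplication) of cardinality at most q^m. -/
import Mathlib

open Module

section Aux

variable {Fq : Type*} [Field Fq] [Fintype Fq] [DecidableEq Fq]

/-- Singleton-type bound: a subspace of `m × n` matrices whose nonzero elements all have
rank at least `d`, and whose column spaces lie in a fixed subspace `K`, has dimension at
most `n * (dim K + 1 - d)`. -/
lemma mrd_singleton_bound {m n : ℕ} (d : ℕ) (hd : 1 ≤ d)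
    (D : Submodule Fq (Matrix (Fin m) (Fin n) Fq))
    (K : Submodule Fq (Fin m → Fq))
    (hK : ∀ M ∈ D, LinearMap.range M.mulVecLin ≤ K)
    (hr : ∀ M ∈ D, M ≠ 0 → d ≤ M.rank) :
    finrank Fq D ≤ n * (finrank Fq K + 1 - d) := by
  rcases lt_or_ge (finrank Fq K) d with hkd | hdk
  · have hD : D = ⊥ := by
      rw [eq_bot_iff]
      intro M hM
      simp only [Submodule.mem_bot]
      by_contra h0
      have h1 := hr M hM h0
      have h2 : M.rank ≤ finrank Fq K := Submodule.finrank_mono (hK M hM)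
      omega
    rw [hD]
    simp
  · have hcast : d - 1 ≤ finrank Fq K := by omega
    let b := Module.finBasis Fq K
    let f : Fin (d - 1) → K := fun i => b (Fin.castLE hcast i)
    have hli : LinearIndependent Fq f :=
      b.linearIndependent.comp _ (Fin.castLE_injective hcast)
    set K' : Submodule Fq K := Submodule.span Fq (Set.range f) with hK'def
    have hK'rank : finrank Fq K' = d - 1 := by
      rw [finrank_span_eq_card hli, Fintype.card_fin]
    let Φ : D →ₗ[Fq] ((Fin n → Fq) →ₗ[Fq] (K ⧸ K')) :=
      { toFun := fun M => K'.mkQ ∘ₗ LinearMap.codRestrict K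
          (Matrix.mulVecLin (M : Matrix (Fin m) (Fin n) Fq))
          (fun v => hK M M.2 (LinearMap.mem_range_self _ v))
        map_add' := by
          intro M N
          refine LinearMap.ext fun v => ?_
          simp only [LinearMap.add_apply, LinearMap.comp_apply]
          rw [← map_add]
          congr 1
          ext
          simp [Matrix.add_mulVec]
        map_smul' := by
          intro c M
          refine LinearMap.ext fun v => ?_
          simp only [RingHom.id_apply, LinearMap.smul_apply, LinearMap.comp_apply]
          rw [← map_smul]
          congr 1
          ext
          simp [Matrix.smul_mulVec] }
    have hinj : Function.Injective Φ := by
      rw [← LinearMap.ker_eq_bot, LinearMap.ker_eq_bot']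
      intro M hM
      by_contra hM0
      have hMne : (M : Matrix (Fin m) (Fin n) Fq) ≠ 0 := fun hc => hM0 (Subtype.ext hc)
      have hrange : LinearMap.range (M : Matrix (Fin m) (Fin n) Fq).mulVecLin
          ≤ K'.map K.subtype := by
        rintro x ⟨v, rfl⟩
        have h0 : (Φ M) v = 0 := by rw [hM]; rfl
        have h1 : LinearMap.codRestrict K
            (Matrix.mulVecLin (M : Matrix (Fin m) (Fin n) Fq))
            (fun v => hK M M.2 (LinearMap.mem_range_self _ v)) v ∈ K' :=
          (Submodule.Quotient.mk_eq_zero K').mp h0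
        exact ⟨_, h1, rfl⟩
      have hle : (M : Matrix (Fin m) (Fin n) Fq).rank ≤ d - 1 := by
        have h2 := Submodule.finrank_mono hrange
        rwa [Submodule.finrank_map_subtype_eq, hK'rank] at h2
      have h3 := hr M M.2 hMne
      omega
    have hfd : finrank Fq D ≤ finrank Fq ((Fin n → Fq) →ₗ[Fq] (K ⧸ K')) :=
      LinearMap.finrank_le_finrank_of_injective hinj
    have hquot : finrank Fq (K ⧸ K') + finrank Fq K' = finrank Fq K :=
      Submodule.finrank_quotient_add_finrank K'
    rw [Module.finrank_linearMap, Module.finrank_pi, Fintype.card_fin] at hfd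
    have hq2 : finrank Fq (K ⧸ K') = finrank Fq K + 1 - d := by omega
    rwa [hq2] at hfd

/-- A nonzero element of the left idealiser of an MRD code is invertible. -/
lemma idealiser_isUnit {m n d : ℕ} (hmn : m ≤ n) (hd1 : 1 < d) (hdm : d ≤ m)
    (C : Submodule Fq (Matrix (Fin m) (Fin n) Fq))
    (hrank : ∀ M ∈ C, M ≠ 0 → d ≤ Matrix.rank M)
    (hdimC : finrank Fq C = n * (m - d + 1))
    (Y : Matrix (Fin m) (Fin m) Fq) (hY : ∀ M ∈ C, Y * M ∈ C) (hY0 : Y ≠ 0) :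
    IsUnit Y := by
  classical
  let ψ : C →ₗ[Fq] Matrix (Fin m) (Fin n) Fq :=
    { toFun := fun M => Y * (M : Matrix (Fin m) (Fin n) Fq)
      map_add' := by intro a b; simp [Matrix.mul_add]
      map_smul' := by intro c a; simp [Matrix.mul_smul] }
  set r := Y.rank with hrdef
  have hrm : r ≤ m := Y.rank_le_card_width.trans (Fintype.card_fin m).le
  have hnull : r + finrank Fq (LinearMap.ker Y.mulVecLin) = m := by
    have h := LinearMap.finrank_range_add_finrank_ker Y.mulVecLin
    rwa [Module.finrank_pi, Fintype.card_fin] at h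
  have hrpos : 0 < r := by
    rcases Nat.eq_zero_or_pos r with h | h
    case inr => exact h
    · exfalso
      apply hY0
      have hbot : LinearMap.range Y.mulVecLin = ⊥ := Submodule.finrank_eq_zero.mp h
      ext i j
      have hcol : Y.mulVec (Pi.single j 1) = 0 := by
        have hmem : Y.mulVecLin (Pi.single j 1) ∈ (⊥ : Submodule Fq (Fin m → Fq)) :=
          hbot ▸ LinearMap.mem_range_self _ _
        simpa using hmem
      rw [Matrix.mulVec_single_one] at hcol
      have := congrFun hcol i
      simpa using this
  by_cases hrm' : r = m
  · have htop : LinearMap.range Y.mulVecLin = ⊤ := by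
      apply Submodule.eq_top_of_finrank_eq
      rw [Module.finrank_pi, Fintype.card_fin]
      exact hrm'
    have hsurj : Function.Surjective Y.mulVecLin := LinearMap.range_eq_top.mp htop
    have hinj : Function.Injective Y.mulVecLin :=
      (LinearMap.injective_iff_surjective).mpr hsurj
    rw [← Matrix.mulVec_injective_iff_isUnit]
    intro a b hab
    exact hinj (by simpa [Matrix.mulVecLin_apply] using hab)
  · exfalso
    have hrm2 : r < m := lt_of_le_of_ne hrm hrm'
    have hb2 : finrank Fq (LinearMap.range ψ) ≤ n * (r + 1 - d) := by
      have h := mrd_singleton_bound d (by omega) (LinearMap.range ψ)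
        (LinearMap.range Y.mulVecLin)
        (by
          rintro M' ⟨M, rfl⟩
          show LinearMap.range (Y * (M : Matrix (Fin m) (Fin n) Fq)).mulVecLin ≤ _
          rw [Matrix.mulVecLin_mul]
          exact LinearMap.range_comp_le_range _ _)
        (by
          rintro M' ⟨M, rfl⟩ h0
          exact hrank _ (hY _ M.2) h0)
      exact h
    have hb1 : finrank Fq (LinearMap.ker ψ) ≤ n * ((m - r) + 1 - d) := by
      have heq : finrank Fq ((LinearMap.ker ψ).map C.subtype) = finrank Fq (LinearMap.ker ψ) :=
        Submodule.finrank_map_subtype_eq _ _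
      have hbound := mrd_singleton_bound d (by omega) ((LinearMap.ker ψ).map C.subtype)
        (LinearMap.ker Y.mulVecLin)
        (by
          rintro M ⟨⟨M₀, hM₀C⟩, hker, rfl⟩
          have hYM : Y * M₀ = 0 := hker
          rintro x ⟨v, rfl⟩
          rw [LinearMap.mem_ker]
          show Y.mulVec (M₀.mulVec v) = 0
          rw [Matrix.mulVec_mulVec, hYM, Matrix.zero_mulVec])
        (by
          rintro M ⟨⟨M₀, hM₀C⟩, hker, rfl⟩ h0
          exact hrank _ hM₀C h0)
      have hk1 : finrank Fq (LinearMap.ker Y.mulVecLin) = m - r := by omega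
      rw [heq, hk1] at hbound
      exact hbound
    have hrn := LinearMap.finrank_range_add_finrank_ker ψ
    rw [hdimC] at hrn
    have hnpos : 0 < n := by omega
    have hlt : (r + 1 - d) + ((m - r) + 1 - d) < m - d + 1 := by omega
    have hA : n * (m - d + 1) ≤ n * ((r + 1 - d) + ((m - r) + 1 - d)) := by
      calc n * (m - d + 1)
          = finrank Fq (LinearMap.range ψ) + finrank Fq (LinearMap.ker ψ) := hrn.symm
        _ ≤ n * (r + 1 - d) + n * ((m - r) + 1 - d) := Nat.add_le_add hb2 hb1
        _ = n * ((r + 1 - d) + ((m - r) + 1 - d)) := (Nat.mul_add _ _ _).symm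
    have hB : n * ((r + 1 - d) + ((m - r) + 1 - d)) < n * (m - d + 1) :=
      mul_lt_mul_of_pos_left hlt hnpos
    exact lt_irrefl _ (lt_of_le_of_lt hA hB)

/-- The inverse of an invertible element of the left idealiser is again in the idealiser. -/
lemma idealiser_inv_mem {m n : ℕ}
    (C : Submodule Fq (Matrix (Fin m) (Fin n) Fq))
    (Y : Matrix (Fin m) (Fin m) Fq) (hY : ∀ M ∈ C, Y * M ∈ C) (hu : IsUnit Y) :
    ∀ M ∈ C, Y⁻¹ * M ∈ C := by
  classical
  let ψ : C →ₗ[Fq] Matrix (Fin m) (Fin n) Fq :=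
    { toFun := fun M => Y * (M : Matrix (Fin m) (Fin n) Fq)
      map_add' := by intro a b; simp [Matrix.mul_add]
      map_smul' := by intro c a; simp [Matrix.mul_smul] }
  have hdet := (Matrix.isUnit_iff_isUnit_det Y).mp hu
  have hinj : Function.Injective ψ := by
    intro a b hab
    have h1 : Y * (a : Matrix (Fin m) (Fin n) Fq) = Y * (b : Matrix (Fin m) (Fin n) Fq) := hab
    have h2 : (a : Matrix (Fin m) (Fin n) Fq) = b := by
      have h3 := congrArg (fun X => Y⁻¹ * X) h1
      simpa [← Matrix.mul_assoc, Matrix.nonsing_inv_mul Y hdet] using h3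
    exact Subtype.ext h2
  have hle : LinearMap.range ψ ≤ C := by
    rintro x ⟨M, rfl⟩
    exact hY _ M.2
  have heq : LinearMap.range ψ = C := by
    apply Submodule.eq_of_le_of_finrank_le hle
    rw [LinearMap.finrank_range_of_inj hinj]
  intro M hM
  obtain ⟨N, hN⟩ : M ∈ LinearMap.range ψ := heq.symm ▸ hM
  have h4 : Y⁻¹ * M = (N : Matrix (Fin m) (Fin n) Fq) := by
    rw [← hN]
    show Y⁻¹ * (Y * (N : Matrix (Fin m) (Fin n) Fq)) = _
    rw [← Matrix.mul_assoc, Matrix.nonsing_inv_mul Y hdet, Matrix.one_mul]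
  rw [h4]
  exact N.2

end Aux

set_option maxHeartbeats 1000000 in
set_option synthInstance.maxHeartbeats 400000 in
/-- the left idealiser of a linear MRD-code with `d > 1`, `m ≤ n`, is a
finite field of cardinality at most `q^m`. -/
theorem left_idealiser_is_field
    (q m n d : ℕ) (hmn : m ≤ n) (hd1 : 1 < d) (hdm : d ≤ m)
    (Fq : Type*) [Field Fq] [Fintype Fq] [DecidableEq Fq] (hq : Fintype.card Fq = q)
    (C : Submodule Fq (Matrix (Fin m) (Fin n) Fq))
    (hrank : ∀ M ∈ C, M ≠ 0 → d ≤ Matrix.rank M)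
    (hdimC : Module.finrank Fq C = n * (m - d + 1)) :
    (∀ Y ∈ {Y : Matrix (Fin m) (Fin m) Fq | ∀ M ∈ C, Y * M ∈ C},
      ∀ Z ∈ {Y : Matrix (Fin m) (Fin m) Fq | ∀ M ∈ C, Y * M ∈ C}, Y * Z = Z * Y) ∧
    (∀ Y ∈ {Y : Matrix (Fin m) (Fin m) Fq | ∀ M ∈ C, Y * M ∈ C},
      Y ≠ 0 → IsUnit Y ∧ Y⁻¹ ∈ {Y : Matrix (Fin m) (Fin m) Fq | ∀ M ∈ C, Y * M ∈ C}) ∧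
    Set.ncard {Y : Matrix (Fin m) (Fin m) Fq | ∀ M ∈ C, Y * M ∈ C} ≤ q ^ m := by
  classical
  have hm0 : 0 < m := by omega
  have hUnit : ∀ Y ∈ {Y : Matrix (Fin m) (Fin m) Fq | ∀ M ∈ C, Y * M ∈ C},
      Y ≠ 0 → IsUnit Y := fun Y hY hY0 =>
    idealiser_isUnit hmn hd1 hdm C hrank hdimC Y hY hY0
  refine ⟨?_, ?_, ?_⟩
  · -- commutativity, via Wedderburn's little theorem
    let L' : Subring (Matrix (Fin m) (Fin m) Fq) :=
      { carrier := {Y | ∀ M ∈ C, Y * M ∈ C}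
        mul_mem' := fun {a b} ha hb M hM => by
          rw [Matrix.mul_assoc]; exact ha _ (hb M hM)
        one_mem' := fun M hM => by rwa [Matrix.one_mul]
        add_mem' := fun {a b} ha hb M hM => by
          rw [Matrix.add_mul]; exact C.add_mem (ha M hM) (hb M hM)
        zero_mem' := fun M hM => by rw [Matrix.zero_mul]; exact C.zero_mem
        neg_mem' := fun {a} ha M hM => by
          rw [Matrix.neg_mul]; exact C.neg_mem (ha M hM) }
    haveI : Finite ↥L' := Subtype.finite
    haveI : Nontrivial ↥L' := by
      refine ⟨⟨1, 0, ?_⟩⟩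
      intro h
      have h2 := congrArg (fun Y : ↥L' => (Y : Matrix (Fin m) (Fin m) Fq) ⟨0, hm0⟩ ⟨0, hm0⟩) h
      simp [Matrix.one_apply_eq] at h2
    haveI : NoZeroDivisors ↥L' :=
      { eq_zero_or_eq_zero_of_mul_eq_zero := by
          rintro ⟨a, ha⟩ ⟨b, hb⟩ hab
          by_cases h : a = 0
          · left; exact Subtype.ext h
          · right
            have hu := hUnit a ha h
            have hdet := (Matrix.isUnit_iff_isUnit_det a).mp hu
            apply Subtype.ext
            have h0 : a * b = 0 := by
              simpa [Subtype.ext_iff] using hab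
            have h1 : a⁻¹ * (a * b) = 0 := by rw [h0, Matrix.mul_zero]
            rwa [← Matrix.mul_assoc, Matrix.nonsing_inv_mul a hdet, Matrix.one_mul] at h1 }
    haveI : IsDomain ↥L' := NoZeroDivisors.to_isDomain _
    have hfield := Finite.isDomain_to_isField ↥L'
    intro Y hY Z hZ
    have hc := hfield.mul_comm (⟨Y, hY⟩ : ↥L') ⟨Z, hZ⟩
    exact congrArg Subtype.val hc
  · intro Y hY hY0
    have hu := hUnit Y hY hY0
    exact ⟨hu, idealiser_inv_mem C Y hY hu⟩
  · -- cardinality bound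
    set v0 : Fin m → Fq := Pi.single ⟨0, hm0⟩ 1 with hv0def
    have hv0 : v0 ≠ 0 := by
      intro h
      have h2 := congrFun h ⟨0, hm0⟩
      simp [hv0def] at h2
    have hinj : Set.InjOn (fun Y : Matrix (Fin m) (Fin m) Fq => Y.mulVec v0)
        {Y | ∀ M ∈ C, Y * M ∈ C} := by
      intro Y hY Z hZ h
      by_contra hne
      have hWmem : Y - Z ∈ {Y : Matrix (Fin m) (Fin m) Fq | ∀ M ∈ C, Y * M ∈ C} :=
        fun M hM => by
          rw [Matrix.sub_mul]; exact C.sub_mem (hY M hM) (hZ M hM)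
      have hW0 : Y - Z ≠ 0 := sub_ne_zero_of_ne hne
      have hu := hUnit _ hWmem hW0
      have hWv : (Y - Z).mulVec v0 = 0 := by
        simp only [Matrix.sub_mulVec]
        rw [show Y.mulVec v0 = Z.mulVec v0 from h]
        simp
      have hinj2 := Matrix.mulVec_injective_iff_isUnit.mpr hu
      apply hv0
      apply hinj2
      rw [hWv, Matrix.mulVec_zero]
    calc Set.ncard {Y : Matrix (Fin m) (Fin m) Fq | ∀ M ∈ C, Y * M ∈ C}
        = ((fun Y : Matrix (Fin m) (Fin m) Fq => Y.mulVec v0) ''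
            {Y | ∀ M ∈ C, Y * M ∈ C}).ncard := (Set.ncard_image_of_injOn hinj).symm
      _ ≤ (Set.univ : Set (Fin m → Fq)).ncard :=
          Set.ncard_le_ncard (Set.subset_univ _) Set.finite_univ
      _ = Nat.card (Fin m → Fq) := Set.ncard_univ _
      _ = q ^ m := by
          rw [Nat.card_eq_fintype_card, Fintype.card_fun, Fintype.card_fin, hq]
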